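/- The Lie subalgebra of divergence-zero polynomial vector fields on the plane generated by the two elements δ_{−1,2} = 3y² ∂/∂x and δ_{2,−1} = 3x² ∂/∂y contains δ_{i,j} for every pair (i,j) with i,j ≥ −1, i−j ≡ 0 mod 3, and (i,j) ∉ {(−1,−1),(0,0)}. -/

import Mathlib

open MvPolynomial

variable (K : Type*) [Field K] [CharZero K]

/-- The divergence-zero vector field
`δ_{i,j} = (j+1) x^(i+1) y^j ∂/∂x - (i+1) x^i y^(j+1) ∂/∂y` on the plane, as a derivation
of `K[x,y]` (for `i, j ≥ -1`; negative exponents only ever occur with coefficient `0`). -/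
noncomputable def deltaDer (i j : ℤ) :
    Derivation K (MvPolynomial (Fin 2) K) (MvPolynomial (Fin 2) K) :=
  MvPolynomial.mkDerivation K fun v =>
    if v = 0 then (j + 1 : ℤ) • (X 0 ^ (i + 1).toNat * X 1 ^ j.toNat)
    else -((i + 1 : ℤ) • (X 0 ^ i.toNat * X 1 ^ (j + 1).toNat))

set_option linter.unusedSectionVars false

lemma deltaDer_X0 (i j : ℤ) :
    deltaDer K i j (X 0) = (j + 1 : ℤ) • (X 0 ^ (i + 1).toNat * X 1 ^ j.toNat) := by
  simp [deltaDer, mkDerivation_X]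

lemma deltaDer_X1 (i j : ℤ) :
    deltaDer K i j (X 1) = -((i + 1 : ℤ) • (X 0 ^ i.toNat * X 1 ^ (j + 1).toNat)) := by
  simp [deltaDer, mkDerivation_X]

lemma tnA (n : ℕ) : ((n:ℤ)+1).toNat = n+1 := by omega
lemma tnB (n : ℕ) : ((n:ℤ)+2).toNat = n+2 := by omega
lemma tnC (n : ℕ) : ((n:ℤ)+3).toNat = n+3 := by omega
lemma tnD (n : ℕ) : ((1:ℤ)+(n:ℤ)).toNat = 1+n := by omega
lemma tnE (n : ℕ) : ((2:ℤ)+(n:ℤ)).toNat = 2+n := by omega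
lemma tnF (n : ℕ) : ((3:ℤ)+(n:ℤ)).toNat = 3+n := by omega

lemma der_ofNat {R A M : Type*} [CommSemiring R] [CommSemiring A] [AddCommMonoid M]
    [Algebra R A] [Module A M] [Module R M] (D : Derivation R A M)
    (n : ℕ) [n.AtLeastTwo] : D (OfNat.ofNat n) = 0 := by
  rw [← Nat.cast_ofNat]; exact D.map_natCast _

lemma tnG (n : ℕ) : ((n:ℤ)+1+1).toNat = n+2 := by omega
lemma tnH (n : ℕ) : ((n:ℤ)+2+1).toNat = n+3 := by omega
lemma tnI (n : ℕ) : ((n:ℤ)+1+2).toNat = n+3 := by omega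

lemma ns1 (n : ℕ) : n+2-1 = n+1 := rfl
lemma ns2 (n : ℕ) : n+3-1 = n+2 := rfl

set_option maxHeartbeats 2000000 in
lemma lemA (i j : ℤ) (hi : 0 ≤ i) (hj : -1 ≤ j) :
    ⁅deltaDer K (-1) 2, deltaDer K i j⁆ = (3*(i+1) : ℤ) • deltaDer K (i-1) (j+2) := by
  have h1 : i = 0 ∨ ∃ a : ℕ, i = (a:ℤ)+1 := by
    rcases Int.lt_or_le 0 i with h | h
    · exact Or.inr ⟨(i-1).toNat, by omega⟩
    · exact Or.inl (by omega)
  have h2 : j = -1 ∨ ∃ b : ℕ, j = (b:ℤ) := by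
    rcases Int.lt_or_le j 0 with h | h
    · exact Or.inl (by omega)
    · exact Or.inr ⟨j.toNat, by omega⟩
  apply derivation_ext
  intro v
  rcases h1 with rfl | ⟨a, rfl⟩ <;> rcases h2 with rfl | ⟨b, rfl⟩ <;> fin_cases v <;>
  · simp only [Fin.mk_zero, Fin.mk_one, Fin.isValue, Derivation.commutator_apply, Derivation.smul_apply, deltaDer_X0, deltaDer_X1,
      add_sub_cancel_right]
    simp only [map_zsmul, map_neg, Derivation.leibniz, Derivation.leibniz_pow,
      deltaDer_X0, deltaDer_X1]
    simp only [tnA, tnB, tnC, tnD, tnE, tnF, tnG, tnH, tnI, Int.toNat_natCast, Int.toNat_zero, Int.toNat_one,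
      add_sub_cancel_right, ns1, ns2, Nat.add_sub_cancel]
    norm_num [smul_smul, zsmul_eq_mul, nsmul_eq_mul, smul_eq_mul]
    try push_cast
    try ring

set_option maxHeartbeats 2000000 in
lemma lemB (i j : ℤ) (hi : -1 ≤ i) (hj : 0 ≤ j) :
    ⁅deltaDer K 2 (-1), deltaDer K i j⁆ = (-3*(j+1) : ℤ) • deltaDer K (i+2) (j-1) := by
  have h2 : j = 0 ∨ ∃ b : ℕ, j = (b:ℤ)+1 := by
    rcases Int.lt_or_le 0 j with h | h
    · exact Or.inr ⟨(j-1).toNat, by omega⟩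
    · exact Or.inl (by omega)
  have h1 : i = -1 ∨ ∃ a : ℕ, i = (a:ℤ) := by
    rcases Int.lt_or_le i 0 with h | h
    · exact Or.inl (by omega)
    · exact Or.inr ⟨i.toNat, by omega⟩
  apply derivation_ext
  intro v
  rcases h1 with rfl | ⟨a, rfl⟩ <;> rcases h2 with rfl | ⟨b, rfl⟩ <;> fin_cases v <;>
  · simp only [Fin.mk_zero, Fin.mk_one, Fin.isValue, Derivation.commutator_apply,
      Derivation.smul_apply, deltaDer_X0, deltaDer_X1, add_sub_cancel_right]
    simp only [map_zsmul, map_neg, Derivation.leibniz, Derivation.leibniz_pow,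
      deltaDer_X0, deltaDer_X1]
    simp only [tnA, tnB, tnC, tnD, tnE, tnF, tnG, tnH, tnI, Int.toNat_natCast, Int.toNat_zero,
      Int.toNat_one, add_sub_cancel_right, ns1, ns2, Nat.add_sub_cancel]
    norm_num [smul_smul, zsmul_eq_mul, nsmul_eq_mul, smul_eq_mul]
    try push_cast
    try ring

/-- The Lie subalgebra of vector fields on the plane generated by
`δ_{-1,2} = 3y² ∂/∂x` and `δ_{2,-1} = 3x² ∂/∂y` contains `δ_{i,j}` for all `(i,j)` with
`i, j ≥ -1`, `i ≡ j (mod 3)`, `(i,j) ∉ {(-1,-1), (0,0)}`. -/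
theorem deltaDer_mem_lieSpan
    (i j : ℤ) (hi : -1 ≤ i) (hj : -1 ≤ j) (hmod : (i - j) % 3 = 0)
    (h1 : ¬(i = -1 ∧ j = -1)) (h2 : ¬(i = 0 ∧ j = 0)) :
    deltaDer K i j ∈
      LieSubalgebra.lieSpan K
        (Derivation K (MvPolynomial (Fin 2) K) (MvPolynomial (Fin 2) K))
        {deltaDer K (-1) 2, deltaDer K 2 (-1)} := by
  set S := LieSubalgebra.lieSpan K
        (Derivation K (MvPolynomial (Fin 2) K) (MvPolynomial (Fin 2) K))
        {deltaDer K (-1) 2, deltaDer K 2 (-1)} with hS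
  have hE : deltaDer K (-1) 2 ∈ S := LieSubalgebra.subset_lieSpan (Set.mem_insert _ _)
  have hG : deltaDer K 2 (-1) ∈ S :=
    LieSubalgebra.subset_lieSpan (Set.mem_insert_of_mem _ rfl)
  have stepA : ∀ i j : ℤ, 0 ≤ i → -1 ≤ j → deltaDer K i j ∈ S →
      deltaDer K (i-1) (j+2) ∈ S := by
    intro i j hi' hj' hm
    have hb := lemA K i j hi' hj'
    have hc : ((3*(i+1) : ℤ) : K) ≠ 0 := by
      rw [Int.cast_ne_zero]; omega
    have heq : deltaDer K (i-1) (j+2)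
        = (((3*(i+1):ℤ):K))⁻¹ • ⁅deltaDer K (-1) 2, deltaDer K i j⁆ := by
      rw [hb, ← Int.cast_smul_eq_zsmul K, smul_smul, inv_mul_cancel₀ hc, one_smul]
    rw [heq]
    exact S.smul_mem _ (S.lie_mem hE hm)
  have stepB : ∀ i j : ℤ, -1 ≤ i → 0 ≤ j → deltaDer K i j ∈ S →
      deltaDer K (i+2) (j-1) ∈ S := by
    intro i j hi' hj' hm
    have hb := lemB K i j hi' hj'
    have hc : ((-3*(j+1) : ℤ) : K) ≠ 0 := by
      rw [Int.cast_ne_zero]; omega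
    have heq : deltaDer K (i+2) (j-1)
        = (((-3*(j+1):ℤ):K))⁻¹ • ⁅deltaDer K 2 (-1), deltaDer K i j⁆ := by
      rw [hb, ← Int.cast_smul_eq_zsmul K, smul_smul, inv_mul_cancel₀ hc, one_smul]
    rw [heq]
    exact S.smul_mem _ (S.lie_mem hG hm)
  have key : ∀ N : ℕ, ∀ i j : ℤ, -1 ≤ i → -1 ≤ j → (i-j)%3 = 0 → ¬(i=-1∧j=-1) →
      ¬(i=0∧j=0) → i+j ≤ N → deltaDer K i j ∈ S := by
    intro N
    induction N with
    | zero => intro i j hi' hj' hmod' h1' h2' hs; exfalso; omega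
    | succ N IH =>
      intro i j hi' hj' hmod' h1' h2' hs
      by_cases hsum : i + j ≤ N
      · exact IH i j hi' hj' hmod' h1' h2' hsum
      by_cases hone : i + j = 1
      · have hcase : (i = -1 ∧ j = 2) ∨ (i = 2 ∧ j = -1) := by omega
        rcases hcase with ⟨rfl, rfl⟩ | ⟨rfl, rfl⟩
        exacts [hE, hG]
      by_cases hjj : 1 ≤ j
      · have hpred := IH (i+1) (j-2) (by omega) (by omega) (by omega) (by omega)
          (by omega) (by omega)
        have hh := stepA (i+1) (j-2) (by omega) (by omega) hpred
        simpa using hh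
      · have hpred := IH (i-2) (j+1) (by omega) (by omega) (by omega) (by omega)
          (by omega) (by omega)
        have hh := stepB (i-2) (j+1) (by omega) (by omega) hpred
        simpa using hh
  exact key (i+j).toNat i j hi hj hmod h1 h2 (by omega)
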